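/- The ℤ-submodule O of B spanned by 1, (1+j)/2, (i+k)/2, (a·j+k)/q is stable under quaternion conjugation x ↦ x̄ (the star involution of B), and for every x ∈ O both the reduced trace x + x̄ and the reduced norm x·x̄ lie in ℤ·1 ⊆ B. -/

import Mathlib

open Quaternion

set_option maxHeartbeats 1000000 in
/-- With `p`, `q` odd primes, `q ≡ 3 (mod 8)`, `(-q/p) = -1`, and `a` an integer
with `a² ≡ -p (mod q)`, the `ℤ`-submodule `O` of `B = ℍ[ℚ, -p, -q]` spanned by
`1, (1+j)/2, (i+k)/2, (a·j+k)/q` is stable under quaternion conjugation `x ↦ star x`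
(the star involution of `B`), and for every `x ∈ O` both the reduced trace `x + star x`
and the reduced norm `x * star x` lie in `ℤ·1 ⊆ B`. -/
theorem quaternionAlgebra_order_star_stable (p q : ℕ) [Fact p.Prime] (hq : q.Prime)
    (hpodd : Odd p) (hqodd : Odd q) (hq8 : q % 8 = 3)
    (hleg : legendreSym p (-(q : ℤ)) = -1)
    (a : ℤ) (ha : a ^ 2 ≡ -(p : ℤ) [ZMOD (q : ℤ)]) :
    let i : ℍ[ℚ, -(p : ℚ), -(q : ℚ)] := ⟨0, 1, 0, 0⟩
    let j : ℍ[ℚ, -(p : ℚ), -(q : ℚ)] := ⟨0, 0, 1, 0⟩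
    let k : ℍ[ℚ, -(p : ℚ), -(q : ℚ)] := ⟨0, 0, 0, 1⟩
    let O : Submodule ℤ ℍ[ℚ, -(p : ℚ), -(q : ℚ)] :=
      Submodule.span ℤ {1, ((2 : ℚ)⁻¹) • (1 + j), ((2 : ℚ)⁻¹) • (i + k),
        ((q : ℚ)⁻¹) • ((a : ℚ) • j + k)}
    ∀ x ∈ O, star x ∈ O ∧ (∃ n : ℤ, x + star x = (n : ℍ[ℚ, -(p : ℚ), -(q : ℚ)])) ∧
      (∃ n : ℤ, x * star x = (n : ℍ[ℚ, -(p : ℚ), -(q : ℚ)])) := by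
  intro i j k O x hx
  have hq0 : (q : ℚ) ≠ 0 := Nat.cast_ne_zero.mpr hq.pos.ne'
  obtain ⟨m, hm⟩ : ∃ m : ℕ, q = 8 * m + 3 := ⟨q / 8, by omega⟩
  obtain ⟨T, hT⟩ : ∃ T : ℤ, a ^ 2 + (p : ℤ) = (q : ℤ) * T := by
    obtain ⟨c, hc⟩ := ha.dvd
    exact ⟨-c, by linarith⟩
  -- every element of O has a standard representation
  have hrep : ∃ n0 n1 n2 n3 : ℤ, x =
      (⟨(n0 : ℚ) + n1 / 2, n2 / 2, n1 / 2 + n3 * a / q, n2 / 2 + n3 / q⟩ :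
        ℍ[ℚ, -(p : ℚ), -(q : ℚ)]) := by
    refine Submodule.span_induction ?_ ⟨0, 0, 0, 0, by ext <;> simp⟩ ?_ ?_ hx
    · rintro y (rfl | rfl | rfl | rfl)
      · exact ⟨1, 0, 0, 0, by ext <;> simp⟩
      · exact ⟨0, 1, 0, 0, by ext <;> simp [i, j, k] <;> norm_num⟩
      · exact ⟨0, 0, 1, 0, by ext <;> simp [i, j, k] <;> norm_num⟩
      · exact ⟨0, 0, 0, 1, by ext <;> simp [i, j, k] <;> field_simp⟩
    · rintro y z - - ⟨a0, a1, a2, a3, rfl⟩ ⟨b0, b1, b2, b3, rfl⟩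
      exact ⟨a0 + b0, a1 + b1, a2 + b2, a3 + b3, by
        ext <;> simp <;> push_cast <;> ring⟩
    · rintro c y - ⟨a0, a1, a2, a3, rfl⟩
      exact ⟨c * a0, c * a1, c * a2, c * a3, by
        ext <;> simp [QuaternionAlgebra.re_smul, QuaternionAlgebra.imI_smul,
          QuaternionAlgebra.imJ_smul, QuaternionAlgebra.imK_smul, zsmul_eq_mul] <;>
        push_cast <;> ring⟩
  obtain ⟨n0, n1, n2, n3, rfl⟩ := hrep
  have hmem : ∀ c0 c1 c2 c3 : ℤ,
      (⟨(c0 : ℚ) + c1 / 2, c2 / 2, c1 / 2 + c3 * a / q, c2 / 2 + c3 / q⟩ :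
        ℍ[ℚ, -(p : ℚ), -(q : ℚ)]) ∈ O := by
    intro c0 c1 c2 c3
    have h0 : (1 : ℍ[ℚ, -(p : ℚ), -(q : ℚ)]) ∈ O := Submodule.subset_span (by simp)
    have h1 : ((2 : ℚ)⁻¹) • (1 + j) ∈ O := Submodule.subset_span (by simp)
    have h2 : ((2 : ℚ)⁻¹) • (i + k) ∈ O := Submodule.subset_span (by simp)
    have h3 : ((q : ℚ)⁻¹) • ((a : ℚ) • j + k) ∈ O := Submodule.subset_span (by simp)
    have : (⟨(c0 : ℚ) + c1 / 2, c2 / 2, c1 / 2 + c3 * a / q, c2 / 2 + c3 / q⟩ :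
        ℍ[ℚ, -(p : ℚ), -(q : ℚ)]) =
        c0 • (1 : ℍ[ℚ, -(p : ℚ), -(q : ℚ)]) + c1 • (((2 : ℚ)⁻¹) • (1 + j)) +
        c2 • (((2 : ℚ)⁻¹) • (i + k)) + c3 • (((q : ℚ)⁻¹) • ((a : ℚ) • j + k)) := by
      ext <;> simp [i, j, k, QuaternionAlgebra.re_smul, QuaternionAlgebra.imI_smul,
        QuaternionAlgebra.imJ_smul, QuaternionAlgebra.imK_smul, zsmul_eq_mul] <;>
      field_simp <;> ring
    rw [this]
    exact add_mem (add_mem (add_mem (Submodule.smul_mem _ _ h0) (Submodule.smul_mem _ _ h1))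
      (Submodule.smul_mem _ _ h2)) (Submodule.smul_mem _ _ h3)
  refine ⟨?_, ⟨2 * n0 + n1, ?_⟩,
    ⟨n0 ^ 2 + n0 * n1 + (n1 ^ 2 + p * n2 ^ 2) * (2 * m + 1) + n1 * n3 * a + p * n2 * n3 +
      n3 ^ 2 * T, ?_⟩⟩
  · have : star (⟨(n0 : ℚ) + n1 / 2, n2 / 2, n1 / 2 + n3 * a / q, n2 / 2 + n3 / q⟩ :
        ℍ[ℚ, -(p : ℚ), -(q : ℚ)]) =
        (⟨((n0 + n1 : ℤ) : ℚ) + (-n1 : ℤ) / 2, (-n2 : ℤ) / 2,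
          ((-n1 : ℤ) : ℚ) / 2 + (-n3 : ℤ) * a / q, ((-n2 : ℤ) : ℚ) / 2 + (-n3 : ℤ) / q⟩ :
        ℍ[ℚ, -(p : ℚ), -(q : ℚ)]) := by
      ext <;> simp <;> push_cast <;> ring
    rw [this]; exact hmem _ _ _ _
  · ext <;>
      simp only [QuaternionAlgebra.re_add, QuaternionAlgebra.imI_add, QuaternionAlgebra.imJ_add,
        QuaternionAlgebra.imK_add, QuaternionAlgebra.re_star, QuaternionAlgebra.imI_star,
        QuaternionAlgebra.imJ_star, QuaternionAlgebra.imK_star, QuaternionAlgebra.re_intCast,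
        QuaternionAlgebra.imI_intCast, QuaternionAlgebra.imJ_intCast,
        QuaternionAlgebra.imK_intCast] <;> push_cast <;> ring
  · have hq' : (q : ℚ) = 8 * m + 3 := by exact_mod_cast congrArg (Nat.cast : ℕ → ℚ) hm
    have hT' : (a : ℚ) ^ 2 = (8 * m + 3) * T - p := by
      have : (a : ℚ) ^ 2 + p = q * T := by exact_mod_cast congrArg (Int.cast : ℤ → ℚ) hT
      rw [hq'] at this; linarith
    have h83 : (8 * (m : ℚ) + 3) ≠ 0 := by positivity
    ext <;>
      simp only [QuaternionAlgebra.re_mul, QuaternionAlgebra.imI_mul, QuaternionAlgebra.imJ_mul,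
        QuaternionAlgebra.imK_mul, QuaternionAlgebra.re_star, QuaternionAlgebra.imI_star,
        QuaternionAlgebra.imJ_star, QuaternionAlgebra.imK_star, QuaternionAlgebra.re_intCast,
        QuaternionAlgebra.imI_intCast, QuaternionAlgebra.imJ_intCast,
        QuaternionAlgebra.imK_intCast, hq'] <;> push_cast <;> field_simp
    all_goals first
    | ring1
    | linear_combination (4 * (n3 : ℚ) ^ 2) * hT'
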